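/- arXiv:1302.6560 — 4 statements merged into one kernel-verified Lean document; each statement's English description precedes it below -/
import Mathlib

section
/- Let A ∈ Mat_{n×m}(ℝ), B ∈ Mat_{n×n}(ℝ), and Y ∈ Mat_{m×n}(ℝ). Let u_Y = [[I_m, Y],[0, I_n]] ∈ Mat_{(m+n)×(m+n)}(ℝ), and let W_{A,B} ⊆ ℝ^{m+n} be the column span of the transpose (A|B)^t. Then det(AY + B) = 0 if and only if the orthogonal projection of u_Y^t W_{A,B} onto the span of the last n standard basis vectors has dimension strictly less than n. -/
open Matrix

/-- Inclusion of the second summand of coordinates, as a linear map. -/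
noncomputable def incl (m n : ℕ) : ((Fin n) → ℝ) →ₗ[ℝ] ((Fin m ⊕ Fin n) → ℝ) where
  toFun w := Sum.elim 0 w
  map_add' x y := by ext (i | j) <;> simp
  map_smul' c x := by ext (i | j) <;> simp

lemma incl_injective (m n : ℕ) : Function.Injective (incl m n) := by
  intro x y h
  ext j
  have := congrFun h (Sum.inr j)
  simpa [incl] using this

theorem stmt_5 (m n : ℕ) (A : Matrix (Fin n) (Fin m) ℝ) (B : Matrix (Fin n) (Fin n) ℝ)
    (Y : Matrix (Fin m) (Fin n) ℝ) :
    let uY : Matrix (Fin m ⊕ Fin n) (Fin m ⊕ Fin n) ℝ :=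
      Matrix.fromBlocks 1 Y 0 1
    let W : Submodule ℝ ((Fin m ⊕ Fin n) → ℝ) :=
      LinearMap.range ((Matrix.fromCols A B)ᵀ.mulVecLin)
    -- orthogonal projection onto the span of the last n standard basis vectors,
    -- given by zeroing out the first m coordinates
    let proj : ((Fin m ⊕ Fin n) → ℝ) →ₗ[ℝ] ((Fin m ⊕ Fin n) → ℝ) :=
      (Matrix.fromBlocks (0 : Matrix (Fin m) (Fin m) ℝ) 0 0
        (1 : Matrix (Fin n) (Fin n) ℝ)).mulVecLin
    ((A * Y + B).det = 0 ↔
      Module.finrank ℝ (Submodule.map proj (Submodule.map (uYᵀ.mulVecLin) W)) < n) := by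
  intro uY W proj
  set C := A * Y + B with hC
  have h1 : Submodule.map proj (Submodule.map (uYᵀ.mulVecLin) W) =
      LinearMap.range (((fromBlocks (0 : Matrix (Fin m) (Fin m) ℝ) 0 0 1) * uYᵀ *
        (fromCols A B)ᵀ).mulVecLin) := by
    rw [Matrix.mulVecLin_mul, Matrix.mulVecLin_mul, LinearMap.range_comp,
      Submodule.map_comp]
  have h2 : (fromBlocks (0 : Matrix (Fin m) (Fin m) ℝ) 0 0 1) * uYᵀ * (fromCols A B)ᵀ =
      fromRows (0 : Matrix (Fin m) (Fin n) ℝ) Cᵀ := by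
    show (fromBlocks (0 : Matrix (Fin m) (Fin m) ℝ) 0 0 1) * (fromBlocks 1 Y 0 1)ᵀ *
      (fromCols A B)ᵀ = _
    rw [Matrix.fromBlocks_transpose, Matrix.transpose_fromCols, Matrix.fromBlocks_multiply,
      Matrix.fromBlocks_mul_fromRows]
    simp [hC, Matrix.transpose_add, Matrix.transpose_mul]
  have h3 : (fromRows (0 : Matrix (Fin m) (Fin n) ℝ) Cᵀ).mulVecLin =
      (incl m n) ∘ₗ Cᵀ.mulVecLin := by
    apply LinearMap.ext
    intro v
    show (fromRows (0 : Matrix (Fin m) (Fin n) ℝ) Cᵀ) *ᵥ v = Sum.elim (0 : Fin m → ℝ) (Cᵀ *ᵥ v)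
    rw [Matrix.fromRows_mulVec, Matrix.zero_mulVec]
  have h4 : Module.finrank ℝ (Submodule.map proj (Submodule.map (uYᵀ.mulVecLin) W)) = C.rank := by
    rw [h1, h2, h3, LinearMap.range_comp]
    rw [← rank_transpose C]
    exact (LinearEquiv.finrank_eq
      (Submodule.equivMapOfInjective _ (incl_injective m n) _)).symm
  rw [h4]
  have hrn : C.rank + Module.finrank ℝ (LinearMap.ker C.mulVecLin) = n := by
    have := LinearMap.finrank_range_add_finrank_ker C.mulVecLin
    simpa [Matrix.rank] using this
  rw [← Matrix.exists_mulVec_eq_zero_iff]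
  have hker : (∃ v ≠ 0, C *ᵥ v = 0) ↔ LinearMap.ker C.mulVecLin ≠ ⊥ := by
    rw [Submodule.ne_bot_iff]
    constructor
    · rintro ⟨v, hv, hcv⟩
      exact ⟨v, by simpa [LinearMap.mem_ker] using hcv, hv⟩
    · rintro ⟨v, hv, hv0⟩
      exact ⟨v, hv0, by simpa [LinearMap.mem_ker] using hv⟩
  rw [hker, Ne, ← Submodule.finrank_eq_zero (R := ℝ)]
  omega
end

section
/- Let A ∈ Mat_{n×m}(ℝ), B ∈ Mat_{n×n}(ℝ) with rank(A|B) = n, Y ∈ Mat_{m×n}(ℝ), and u_Y = [[I_m, Y],[0, I_n]]. Let W_{A,B} ⊆ ℝ^{m+n} be the column span of (A|B)^t. Then det(AY + B) = 0 if and only if (u_Y^t W_{A,B}) ∩ E_m^+ ≠ {0}, where E_m^+ is the span of the first m standard basis vectors. -/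
open Matrix

private lemma mem_span_inl_iff {m n : ℕ} (v : (Fin m ⊕ Fin n) → ℝ) :
    v ∈ Submodule.span ℝ (Set.range fun i : Fin m =>
        (Pi.single (Sum.inl i : Fin m ⊕ Fin n) (1 : ℝ))) ↔
      ∀ j : Fin n, v (Sum.inr j) = 0 := by
  constructor
  · intro hv j
    refine Submodule.span_induction ?_ ?_ ?_ ?_ hv
    · rintro x ⟨i, rfl⟩
      simp [Pi.single_apply]
    · rfl
    · intro a b _ _ ha hb; simp [ha, hb]
    · intro c a _ ha; simp [ha]
  · intro h
    have hv : v = ∑ i : Fin m, v (Sum.inl i) •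
        (Pi.single (Sum.inl i : Fin m ⊕ Fin n) (1 : ℝ) : (Fin m ⊕ Fin n) → ℝ) := by
      funext k
      rw [Finset.sum_apply]
      rcases k with k | k
      · simp [Finset.sum_apply, Pi.single_apply]
      · simp [Finset.sum_apply, Pi.single_apply, h k]
    rw [hv]
    exact Submodule.sum_mem _ fun i _ =>
      Submodule.smul_mem _ _ (Submodule.subset_span ⟨i, rfl⟩)

theorem stmt_6 (m n : ℕ) (A : Matrix (Fin n) (Fin m) ℝ) (B : Matrix (Fin n) (Fin n) ℝ)
    (hrank : (Matrix.fromCols A B).rank = n)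
    (Y : Matrix (Fin m) (Fin n) ℝ) :
    let uY : Matrix (Fin m ⊕ Fin n) (Fin m ⊕ Fin n) ℝ :=
      Matrix.fromBlocks 1 Y 0 1
    let W : Submodule ℝ ((Fin m ⊕ Fin n) → ℝ) :=
      LinearMap.range ((Matrix.fromCols A B)ᵀ.mulVecLin)
    let EmPlus : Submodule ℝ ((Fin m ⊕ Fin n) → ℝ) :=
      Submodule.span ℝ (Set.range fun i : Fin m =>
        (Pi.single (Sum.inl i : Fin m ⊕ Fin n) (1 : ℝ)))
    ((A * Y + B).det = 0 ↔ (Submodule.map (uYᵀ.mulVecLin) W) ⊓ EmPlus ≠ ⊥) := by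
  intro uY W EmPlus
  set M := Matrix.fromCols A B with hM
  set C := A * Y + B with hC
  -- key product identity
  have hprod : uYᵀ * Mᵀ = Matrix.fromRows Aᵀ Cᵀ := by
    simp only [hM, hC, uY, Matrix.transpose_fromCols, Matrix.fromBlocks_transpose,
      Matrix.transpose_one, Matrix.transpose_zero, Matrix.fromBlocks_mul_fromRows,
      Matrix.transpose_add, Matrix.transpose_mul, Matrix.one_mul, Matrix.zero_mul,
      add_zero, zero_add]
  have hcomp : ∀ x : Fin n → ℝ,
      uYᵀ.mulVecLin (Mᵀ.mulVecLin x) = Sum.elim (Aᵀ *ᵥ x) (Cᵀ *ᵥ x) := by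
    intro x
    rw [Matrix.mulVecLin_apply, Matrix.mulVecLin_apply, Matrix.mulVec_mulVec, hprod,
      Matrix.fromRows_mulVec]
  -- injectivity of Mᵀ.mulVecLin
  have hker : LinearMap.ker Mᵀ.mulVecLin = ⊥ := by
    have hrk : Mᵀ.rank = n := by rw [Matrix.rank_transpose]; exact hrank
    have h1 := LinearMap.finrank_range_add_finrank_ker (Mᵀ.mulVecLin)
    rw [Matrix.rank] at hrk
    rw [hrk] at h1
    simp only [Module.finrank_fintype_fun_eq_card, Fintype.card_fin] at h1
    have : Module.finrank ℝ (LinearMap.ker Mᵀ.mulVecLin) = 0 := by omega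
    exact Submodule.finrank_eq_zero.mp this
  have hinj : Function.Injective Mᵀ.mulVecLin := LinearMap.ker_eq_bot.mp hker
  constructor
  · intro hdet
    obtain ⟨x, hx0, hxe⟩ : ∃ x, x ≠ 0 ∧ Cᵀ *ᵥ x = 0 := by
      have : Cᵀ.det = 0 := by rw [Matrix.det_transpose]; exact hdet
      obtain ⟨x, hx0, hxe⟩ := Matrix.exists_mulVec_eq_zero_iff.mpr this
      exact ⟨x, hx0, hxe⟩
    rw [Submodule.ne_bot_iff]
    refine ⟨uYᵀ.mulVecLin (Mᵀ.mulVecLin x), Submodule.mem_inf.mpr ⟨?_, ?_⟩, ?_⟩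
    · exact Submodule.mem_map_of_mem (LinearMap.mem_range_self _ x)
    · rw [hcomp x]
      exact (mem_span_inl_iff _).mpr fun j => by simp [hxe]
    · intro hzero
      apply hx0
      apply hinj
      rw [map_zero]
      rw [hcomp x] at hzero
      have hA : Aᵀ *ᵥ x = 0 := by
        funext i; exact congrFun hzero (Sum.inl i)
      have hB : Bᵀ *ᵥ x = 0 := by
        have : Cᵀ = Yᵀ * Aᵀ + Bᵀ := by
          simp [hC, Matrix.transpose_add, Matrix.transpose_mul]
        have h2 : (Yᵀ * Aᵀ + Bᵀ) *ᵥ x = 0 := by rw [← this]; exact hxe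
        rw [Matrix.add_mulVec, ← Matrix.mulVec_mulVec, hA] at h2
        simpa using h2
      simp [hM, Matrix.transpose_fromCols, Matrix.mulVecLin_apply,
        Matrix.fromRows_mulVec, hA, hB]
  · intro hne
    obtain ⟨v, hv, hv0⟩ := Submodule.ne_bot_iff _ |>.mp hne
    obtain ⟨hvW, hvE⟩ := Submodule.mem_inf.mp hv
    obtain ⟨w, hw, rfl⟩ := hvW
    obtain ⟨x, rfl⟩ := hw
    have hCx : Cᵀ *ᵥ x = 0 := by
      funext j
      have := (mem_span_inl_iff _).mp hvE j
      rw [hcomp x] at this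
      exact this
    have hx0 : x ≠ 0 := by
      rintro rfl
      apply hv0
      simp
    have : Cᵀ.det = 0 := Matrix.exists_mulVec_eq_zero_iff.mp ⟨x, hx0, hCx⟩
    rw [Matrix.det_transpose] at this
    exact this
end

section
/- Let A ∈ Mat_{n×m}(ℝ), B ∈ Mat_{n×n}(ℝ) with rank(A|B) = n, and Y ∈ Mat_{m×n}(ℝ). Suppose C ∈ Mat_{m×m}(ℝ) and D ∈ Mat_{m×n}(ℝ) are such that the columns of (C|D)^t form a basis for the orthogonal complement in ℝ^{m+n} of W_{A,B}, the column span of (A|B)^t. Then det(AY + B) = 0 if and only if det(D Y^t − C) = 0. -/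
open Matrix

theorem stmt_7 (m n : ℕ) (A : Matrix (Fin n) (Fin m) ℝ) (B : Matrix (Fin n) (Fin n) ℝ)
    (hrank : (Matrix.fromCols A B).rank = n)
    (Y : Matrix (Fin m) (Fin n) ℝ)
    (C : Matrix (Fin m) (Fin m) ℝ) (D : Matrix (Fin m) (Fin n) ℝ)
    -- the columns of (C|D)ᵀ (i.e. the rows of (C|D)) form a basis of the orthogonal
    -- complement of W_{A,B}, the column span of (A|B)ᵀ
    (hindep : LinearIndependent ℝ (fun j : Fin m => (Matrix.fromCols C D) j))
    (hspan : (Submodule.span ℝ (Set.range fun j : Fin m => (Matrix.fromCols C D) j)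
        : Set ((Fin m ⊕ Fin n) → ℝ)) =
      {v : (Fin m ⊕ Fin n) → ℝ |
        ∀ w ∈ LinearMap.range ((Matrix.fromCols A B)ᵀ.mulVecLin), v ⬝ᵥ w = 0}) :
    ((A * Y + B).det = 0 ↔ (D * Yᵀ - C).det = 0) := by
  set M := Matrix.fromCols A B with hM
  set N := Matrix.fromCols C D with hN
  -- Each row of N is orthogonal to the range of Mᵀ
  have h1 : ∀ (j : Fin m) (u : Fin n → ℝ), N j ⬝ᵥ (Mᵀ *ᵥ u) = 0 := by
    intro j u
    have hmem : N j ∈ (Submodule.span ℝ (Set.range fun j : Fin m => N j)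
        : Set ((Fin m ⊕ Fin n) → ℝ)) :=
      Submodule.subset_span (Set.mem_range_self j)
    rw [hspan] at hmem
    exact hmem (Mᵀ *ᵥ u) ⟨u, rfl⟩
  have hNMt : ∀ u : Fin n → ℝ, N *ᵥ (Mᵀ *ᵥ u) = 0 := by
    intro u
    funext j
    exact h1 j u
  -- finrank facts
  have hcard : Module.finrank ℝ ((Fin m ⊕ Fin n) → ℝ) = m + n := by
    simp [Module.finrank_pi]
  have hrankN : N.rank = m := by
    rw [← Matrix.rank_transpose, Matrix.rank_eq_finrank_span_cols, Matrix.col_transpose]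
    rw [show Set.range N.row = Set.range fun j => N j from rfl, finrank_span_eq_card hindep]
    simp
  have hrankMt : Mᵀ.rank = n := by rw [Matrix.rank_transpose, hrank]
  -- kernel of Mᵀ is trivial
  have hkerMt : LinearMap.ker Mᵀ.mulVecLin = ⊥ := by
    have h2 := LinearMap.finrank_range_add_finrank_ker Mᵀ.mulVecLin
    rw [show Module.finrank ℝ (LinearMap.range Mᵀ.mulVecLin) = n from hrankMt] at h2
    simp only [Module.finrank_pi, Fintype.card_fin] at h2
    have : Module.finrank ℝ (LinearMap.ker Mᵀ.mulVecLin) = 0 := by omega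
    exact Submodule.finrank_eq_zero.mp this
  -- range Mᵀ = ker N
  have hWT : LinearMap.range Mᵀ.mulVecLin ≤ LinearMap.ker N.mulVecLin := by
    rintro p ⟨u, rfl⟩
    exact hNMt u
  have hkerN : Module.finrank ℝ (LinearMap.ker N.mulVecLin) = n := by
    have h2 := LinearMap.finrank_range_add_finrank_ker N.mulVecLin
    rw [show Module.finrank ℝ (LinearMap.range N.mulVecLin) = m from hrankN, hcard] at h2
    omega
  have hWeqT : LinearMap.range Mᵀ.mulVecLin = LinearMap.ker N.mulVecLin := by
    apply Submodule.eq_of_le_of_finrank_le hWT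
    rw [hkerN, show Module.finrank ℝ (LinearMap.range Mᵀ.mulVecLin) = n from hrankMt]
  -- reformulate determinants via nonzero kernel vectors
  rw [← Matrix.det_transpose (A * Y + B), ← Matrix.exists_mulVec_eq_zero_iff,
    ← Matrix.exists_mulVec_eq_zero_iff]
  constructor
  · rintro ⟨v, hv0, hv⟩
    rw [Matrix.transpose_add, Matrix.transpose_mul] at hv
    have hv' : Yᵀ *ᵥ (Aᵀ *ᵥ v) + Bᵀ *ᵥ v = 0 := by
      rwa [Matrix.add_mulVec, ← Matrix.mulVec_mulVec] at hv
    refine ⟨Aᵀ *ᵥ v, ?_, ?_⟩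
    · intro hx
      apply hv0
      have hB : Bᵀ *ᵥ v = 0 := by
        have := hv'
        rw [hx, Matrix.mulVec_zero, zero_add] at this
        exact this
      have hMv : Mᵀ *ᵥ v = 0 := by
        rw [hM, Matrix.transpose_fromCols, Matrix.fromRows_mulVec, hx, hB]
        ext (i | i) <;> simp
      have : v ∈ LinearMap.ker Mᵀ.mulVecLin := hMv
      rwa [hkerMt, Submodule.mem_bot] at this
    · have key : N *ᵥ (Mᵀ *ᵥ v) = 0 := hNMt v
      rw [hM, hN, Matrix.transpose_fromCols, Matrix.fromRows_mulVec,
        Matrix.fromCols_mulVec_sumElim] at key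
      have hYx : Yᵀ *ᵥ (Aᵀ *ᵥ v) = -(Bᵀ *ᵥ v) := by
        rw [eq_neg_iff_add_eq_zero]; exact hv'
      rw [Matrix.sub_mulVec, ← Matrix.mulVec_mulVec, hYx, Matrix.mulVec_neg]
      have hkey0 : -(C *ᵥ (Aᵀ *ᵥ v) + D *ᵥ (Bᵀ *ᵥ v)) = 0 := neg_eq_zero.mpr key
      rw [← hkey0]
      abel
  · rintro ⟨x, hx0, hx⟩
    have hx' : (D * Yᵀ) *ᵥ x - C *ᵥ x = 0 := by rwa [Matrix.sub_mulVec] at hx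
    have hp : Sum.elim (-x) (Yᵀ *ᵥ x) ∈ LinearMap.ker N.mulVecLin := by
      show N *ᵥ Sum.elim (-x) (Yᵀ *ᵥ x) = 0
      rw [hN, Matrix.fromCols_mulVec_sumElim, Matrix.mulVec_neg, Matrix.mulVec_mulVec,
        neg_add_eq_sub, ← hx']
    rw [← hWeqT] at hp
    obtain ⟨u, hu⟩ := hp
    have hu' : Mᵀ *ᵥ u = Sum.elim (-x) (Yᵀ *ᵥ x) := hu
    rw [hM, Matrix.transpose_fromCols, Matrix.fromRows_mulVec] at hu'
    have hA : Aᵀ *ᵥ u = -x := by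
      funext i; exact congrFun hu' (Sum.inl i)
    have hB : Bᵀ *ᵥ u = Yᵀ *ᵥ x := by
      funext i; exact congrFun hu' (Sum.inr i)
    refine ⟨u, ?_, ?_⟩
    · intro h0
      apply hx0
      rw [h0, Matrix.mulVec_zero] at hA
      simpa using hA.symm
    · rw [Matrix.transpose_add, Matrix.transpose_mul, Matrix.add_mulVec,
        ← Matrix.mulVec_mulVec, hA, hB, Matrix.mulVec_neg]
      abel
end

section
/- For any A ∈ Mat_{2×2}(ℝ), B ∈ Mat_{2×2}(ℝ) with rank(A|B) = 2, there exist real numbers x, y, z such that det(A·[[x,y],[z,x]] + B) ≠ 0. -/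
open Matrix

lemma aux (M : Matrix (Fin 2) (Fin 2 ⊕ Fin 2) ℝ) (u : Fin 2 → ℝ) (hu : u ≠ 0)
    (h : u ᵥ* M = 0) : M.rank ≠ 2 := by
  intro hr
  have hrt : Mᵀ.rank = 2 := by rw [Matrix.rank_transpose]; exact hr
  have hrn := LinearMap.finrank_range_add_finrank_ker (Mᵀ.mulVecLin)
  rw [show Module.finrank ℝ ↥(LinearMap.range Mᵀ.mulVecLin) = Mᵀ.rank from rfl, hrt] at hrn
  rw [Module.finrank_fin_fun] at hrn
  have hker : LinearMap.ker Mᵀ.mulVecLin = ⊥ := Submodule.finrank_eq_zero.mp (by omega)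
  have : u ∈ LinearMap.ker Mᵀ.mulVecLin := by
    simp [LinearMap.mem_ker, Matrix.mulVecLin_apply, Matrix.mulVec_transpose, h]
  rw [hker, Submodule.mem_bot] at this
  exact hu this

theorem stmt_8 (A B : Matrix (Fin 2) (Fin 2) ℝ)
    (hrank : (Matrix.fromCols A B).rank = 2) :
    ∃ x y z : ℝ, (A * !![x, y; z, x] + B).det ≠ 0 := by
  by_contra hc
  push_neg at hc
  have hdet : ∀ x y z : ℝ,
      (A 0 0*x + A 0 1*z + B 0 0) * (A 1 0*y + A 1 1*x + B 1 1)
        - (A 0 0*y + A 0 1*x + B 0 1) * (A 1 0*x + A 1 1*z + B 1 0) = 0 := by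
    intro x y z
    have := hc x y z
    simp [Matrix.det_fin_two, Matrix.mul_apply, Fin.sum_univ_two, Matrix.add_apply] at this
    linarith [this]
  set a := A 0 0 with ha'; set b := A 0 1 with hb'; set c := A 1 0 with hc'
  set d := A 1 1 with hd'
  set p := B 0 0 with hp'; set q := B 0 1 with hq'; set r := B 1 0 with hr'
  set s := B 1 1 with hs'
  have h0 := hdet 0 0 0
  have h1 := hdet 1 0 0
  have h2 := hdet (-1) 0 0
  have hy := hdet 0 1 0
  have hz := hdet 0 0 1
  have m34 : p * s - q * r = 0 := by linear_combination h0
  have m12 : a * d - b * c = 0 := by linear_combination (1/2)*h1 + (1/2)*h2 - h0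
  have hE : a*s + p*d - b*r - q*c = 0 := by linear_combination (1/2)*h1 - (1/2)*h2
  have m13 : a * r - c * p = 0 := by linear_combination h0 - hy
  have m24 : b * s - d * q = 0 := by linear_combination hz - h0
  have m14 : a * s - c * q = 0 := by
    have sq : (a*s - c*q)^2 = 0 := by
      linear_combination (a*s - c*q)*hE + (b*s - d*q)*m13 - (p*s - q*r)*m12
    exact pow_eq_zero_iff (by norm_num) |>.mp sq
  have m23 : b * r - d * p = 0 := by linear_combination m14 - hE
  have key : ∀ u : Fin 2 → ℝ, u ≠ 0 → u ᵥ* A = 0 → u ᵥ* B = 0 → False := by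
    intro u hu hA hB
    refine aux (Matrix.fromCols A B) u hu ?_ hrank
    rw [Matrix.vecMul_fromCols, hA, hB]
    ext (j | j) <;> rfl
  have vz : ∀ (u1 u2 : ℝ) (M : Matrix (Fin 2) (Fin 2) ℝ),
      u1 * M 0 0 + u2 * M 1 0 = 0 → u1 * M 0 1 + u2 * M 1 1 = 0 →
      (![u1, u2] ᵥ* M) = 0 := by
    intro u1 u2 M e0 e1
    ext j
    fin_cases j <;>
      simpa [Matrix.vecMul, dotProduct, Fin.sum_univ_two] using (by assumption : _)
  have vne : ∀ (u1 u2 : ℝ), u2 ≠ 0 → (![u1, u2] : Fin 2 → ℝ) ≠ 0 := by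
    intro u1 u2 h2 h
    exact h2 (by simpa using congrFun h 1)
  by_cases ha : a = 0
  · by_cases hb : b = 0
    · by_cases hp : p = 0
      · by_cases hq : q = 0
        · exact key ![1, 0] (fun h => by simpa using congrFun h 0)
            (vz 1 0 A (by rw [← ha', ← hc']; simp [ha]) (by rw [← hb', ← hd']; simp [hb]))
            (vz 1 0 B (by rw [← hp', ← hr']; simp [hp]) (by rw [← hq', ← hs']; simp [hq]))
        · exact key ![s, -q] (vne s (-q) (neg_ne_zero.mpr hq))
            (vz s (-q) A (by rw [← ha', ← hc']; linear_combination m14)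
              (by rw [← hb', ← hd']; linear_combination m24))
            (vz s (-q) B (by rw [← hp', ← hr']; linear_combination m34)
              (by rw [← hq', ← hs']; ring))
      · exact key ![r, -p] (vne r (-p) (neg_ne_zero.mpr hp))
          (vz r (-p) A (by rw [← ha', ← hc']; linear_combination m13)
            (by rw [← hb', ← hd']; linear_combination m23))
          (vz r (-p) B (by rw [← hp', ← hr']; ring)
            (by rw [← hq', ← hs']; linear_combination -m34))
    · exact key ![d, -b] (vne d (-b) (neg_ne_zero.mpr hb))
        (vz d (-b) A (by rw [← ha', ← hc']; linear_combination m12)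
          (by rw [← hb', ← hd']; ring))
        (vz d (-b) B (by rw [← hp', ← hr']; linear_combination -m23)
          (by rw [← hq', ← hs']; linear_combination -m24))
  · exact key ![c, -a] (vne c (-a) (neg_ne_zero.mpr ha))
      (vz c (-a) A (by rw [← ha', ← hc']; ring)
        (by rw [← hb', ← hd']; linear_combination -m12))
      (vz c (-a) B (by rw [← hp', ← hr']; linear_combination -m13)
        (by rw [← hq', ← hs']; linear_combination -m14))
end
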